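/- With m = 2 resources, the mechanism F2 satisfies SI, EF, and PO. -/
import Mathlib


open Finset
open scoped Classical

/-- A valid instance: all demands lie in `(0,1]` and every agent has a resource
with normalized demand `1` (its dominant resource). -/
def ValidInstance {n m : ℕ} (d : Fin n → Fin m → ℝ) : Prop :=
  (∀ i r, 0 < d i r ∧ d i r ≤ 1) ∧ ∀ i, ∃ r, d i r = 1

/-- Entrywise nonnegative allocation. -/
def NonnegAlloc {n m : ℕ} (A : Fin n → Fin m → ℝ) : Prop := ∀ i r, 0 ≤ A i r

/-- A feasible allocation: nonnegative and no resource over-allocated. -/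
def Feasible {n m : ℕ} (A : Fin n → Fin m → ℝ) : Prop :=
  NonnegAlloc A ∧ ∀ r, ∑ i, A i r ≤ 1

/-- Leontief utility of a bundle `Av` for demand vector `dv`:
the largest `y ≥ 0` with `y * dv r ≤ Av r` for all `r`. -/
noncomputable def util {m : ℕ} (dv Av : Fin m → ℝ) : ℝ :=
  sSup {y : ℝ | 0 ≤ y ∧ ∀ r, y * dv r ≤ Av r}

/-- Share incentive: every agent gets utility at least `1/n`. -/
def SI {n m : ℕ} (d A : Fin n → Fin m → ℝ) : Prop :=
  ∀ i, (1 : ℝ) / n ≤ util (d i) (A i)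

/-- Envy-freeness: no agent prefers another agent's bundle. -/
def EF {n m : ℕ} (d A : Fin n → Fin m → ℝ) : Prop :=
  ∀ i j, util (d i) (A j) ≤ util (d i) (A i)

/-- Social welfare: the sum of all utilities. -/
noncomputable def SW {n m : ℕ} (d A : Fin n → Fin m → ℝ) : ℝ :=
  ∑ i, util (d i) (A i)

/-- Utilization: the minimum over resources of the total allocated amount. -/
noncomputable def Util {n m : ℕ} (A : Fin n → Fin m → ℝ) : ℝ :=
  ⨅ r : Fin m, ∑ i, A i r

/-- Pareto optimality of an allocation. -/
def PO {n m : ℕ} (d A : Fin n → Fin m → ℝ) : Prop :=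
  ¬ ∃ A' : Fin n → Fin m → ℝ, Feasible A' ∧
      (∀ i, util (d i) (A i) ≤ util (d i) (A' i)) ∧
      ∃ i, util (d i) (A i) < util (d i) (A' i)

/-- Agents whose dominant resource is resource 1 (index `0`). -/
noncomputable def G1 {n m : ℕ} [NeZero m] (d : Fin n → Fin m → ℝ) : Finset (Fin n) :=
  Finset.univ.filter (fun i => d i 0 = 1)

/-- Agents whose demand for resource 1 (index `0`) is below `1`. -/
noncomputable def G2 {n m : ℕ} [NeZero m] (d : Fin n → Fin m → ℝ) : Finset (Fin n) :=
  Finset.univ.filter (fun i => d i 0 < 1)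

/-- Minority ratio `α = |G2| / n` for two resources. -/
def MinorityRatio {n : ℕ} (d : Fin n → Fin 2 → ℝ) (α : ℚ) : Prop :=
  ((G2 d).card : ℚ) = α * n

/-- The DRF allocation: every agent gets `x* • d i` with
`x* = 1 / max_r Σ_j d j r`. -/
noncomputable def DRF {n m : ℕ} (d : Fin n → Fin m → ℝ) : Fin n → Fin m → ℝ :=
  fun i r => (1 / ⨆ r' : Fin m, ∑ j, d j r') * d i r

/-- The F1 allocation at water level `t`: agents in `G1` get dominant share `1/n`;
an agent `i` with `d i 0 < 1` gets `max (d i 0 / n) t` of resource 1, i.e. has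
scale factor `max (1/n) (t / d i 0)`. -/
noncomputable def F1At {n m : ℕ} [NeZero m] (d : Fin n → Fin m → ℝ) (t : ℝ) :
    Fin n → Fin m → ℝ :=
  fun i r => (if d i 0 = 1 then (1 : ℝ) / n else max ((1 : ℝ) / n) (t / d i 0)) * d i r

/-- The F1 allocation: F1 at the largest feasible water level. -/
noncomputable def F1 {n m : ℕ} [NeZero m] (d : Fin n → Fin m → ℝ) : Fin n → Fin m → ℝ :=
  F1At d (sSup {t : ℝ | 0 ≤ t ∧ Feasible (F1At d t)})

/-- Residual amount of resource 1 after every agent receives `(1/n) • d i`. -/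
noncomputable def R1 {n : ℕ} (d : Fin n → Fin 2 → ℝ) : ℝ :=
  1 - ((G1 d).card : ℝ) / n - (∑ i ∈ G2 d, d i 0) / n

/-- Residual amount of resource 2 after every agent receives `(1/n) • d i`. -/
noncomputable def R2 {n : ℕ} (d : Fin n → Fin 2 → ℝ) : ℝ :=
  1 - ((G2 d).card : ℝ) / n - (∑ i ∈ G1 d, d i 1) / n

/-- Total increase over the equal split of the resource-1 shares of `G1`. -/
noncomputable def dS1 {n : ℕ} (d A : Fin n → Fin 2 → ℝ) : ℝ :=
  (∑ i ∈ G1 d, A i 0) - ((G1 d).card : ℝ) / n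

/-- Total increase over the equal split of the resource-2 shares of `G2`. -/
noncomputable def dS2 {n : ℕ} (d A : Fin n → Fin 2 → ℝ) : ℝ :=
  (∑ i ∈ G2 d, A i 1) - ((G2 d).card : ℝ) / n

/-- Water-filling structure of the F2-type allocations: within `G1` the
resource-2 shares are `max (d i 1 / n) t1`, within `G2` the resource-1 shares
are `max (d i 0 / n) t2`, and bundles are proportional to demands. -/
def Waterfill {n : ℕ} (d A : Fin n → Fin 2 → ℝ) (t1 t2 : ℝ) : Prop :=
  ∀ i, (d i 0 = 1 → A i 1 = max (d i 1 / n) t1 ∧ A i 0 = A i 1 / d i 1) ∧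
       (d i 0 < 1 → A i 0 = max (d i 0 / n) t2 ∧ A i 1 = A i 0 / d i 0)

/-- The output of an F2-type mechanism whose coupled rates follow the ratio
`ρ1 / ρ2`: a feasible water-filling allocation with
`dS1 / dS2 = ρ1 / ρ2` in which some resource is fully allocated. -/
def IsF2AllocWith {n : ℕ} (d A : Fin n → Fin 2 → ℝ) (ρ1 ρ2 : ℝ) : Prop :=
  ∃ t1 t2 : ℝ, 0 ≤ t1 ∧ 0 ≤ t2 ∧ Waterfill d A t1 t2 ∧
    dS1 d A * ρ2 = dS2 d A * ρ1 ∧ Feasible A ∧ ∃ r, ∑ i, A i r = 1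

/-- The output of mechanism F2 (rates coupled by `R1 / R2`). -/
def IsF2Alloc {n : ℕ} (d A : Fin n → Fin 2 → ℝ) : Prop :=
  IsF2AllocWith d A (R1 d) (R2 d)

/-- `R*_1 = R_1 + d_{i*,1}/n` where `i*` minimizes `d i 0` over `G2`. -/
noncomputable def R1s {n : ℕ} (d : Fin n → Fin 2 → ℝ) : ℝ :=
  R1 d + sInf ((fun i => d i 0) '' {i : Fin n | d i 0 < 1}) / n

/-- `R*_2 = R_2 + d_{j*,2}/n` where `j*` minimizes `d j 1` over `G1`. -/
noncomputable def R2s {n : ℕ} (d : Fin n → Fin 2 → ℝ) : ℝ :=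
  R2 d + sInf ((fun i => d i 1) '' {i : Fin n | d i 0 = 1}) / n

/-- The output of mechanism F2* (rates coupled by `R*_1 / R*_2`). -/
def IsF2sAlloc {n : ℕ} (d A : Fin n → Fin 2 → ℝ) : Prop :=
  IsF2AllocWith d A (R1s d) (R2s d)

private lemma util_eq_min (dv Av : Fin 2 → ℝ) (h0 : ∀ r, 0 < dv r) (h1 : ∀ r, 0 ≤ Av r) :
    util dv Av = min (Av 0 / dv 0) (Av 1 / dv 1) := by
  have hmem : min (Av 0 / dv 0) (Av 1 / dv 1) ∈ {y : ℝ | 0 ≤ y ∧ ∀ r, y * dv r ≤ Av r} := by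
    refine ⟨le_min (div_nonneg (h1 0) (h0 0).le) (div_nonneg (h1 1) (h0 1).le), ?_⟩
    intro r
    fin_cases r
    · exact (le_div_iff₀ (h0 0)).1 (min_le_left _ _)
    · exact (le_div_iff₀ (h0 1)).1 (min_le_right _ _)
  apply le_antisymm
  · refine csSup_le ⟨_, hmem⟩ ?_
    rintro b ⟨-, hb⟩
    exact le_min ((le_div_iff₀ (h0 0)).2 (hb 0)) ((le_div_iff₀ (h0 1)).2 (hb 1))
  · exact le_csSup ⟨Av 0 / dv 0, fun b hb => (le_div_iff₀ (h0 0)).2 (hb.2 0)⟩ hmem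

/-- With two resources, mechanism F2 satisfies SI, EF and PO. -/
theorem f2_properties :
    ∀ (n : ℕ), 0 < n → ∀ d : Fin n → Fin 2 → ℝ, ValidInstance d →
      ∀ A : Fin n → Fin 2 → ℝ, IsF2Alloc d A →
        SI d A ∧ EF d A ∧ PO d A :=  by
  intro n hn d hd A hA2
  obtain ⟨t1, t2, ht1, ht2, hW, hratio, hFeas, rfull, hfull⟩ := hA2
  have hnR : (0:ℝ) < n := Nat.cast_pos.mpr hn
  have hd0 : ∀ i r, 0 < d i r := fun i r => (hd.1 i r).1
  have hd1 : ∀ i r, d i r ≤ 1 := fun i r => (hd.1 i r).2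
  have hgrp : ∀ i, d i 0 = 1 ∨ (d i 0 < 1 ∧ d i 1 = 1) := by
    intro i
    rcases eq_or_lt_of_le (hd1 i 0) with h | h
    · exact Or.inl h
    · refine Or.inr ⟨h, ?_⟩
      obtain ⟨r, hr⟩ := hd.2 i
      fin_cases r
      · exact absurd hr h.ne
      · exact hr
  set y : Fin n → ℝ := fun i => if d i 0 = 1 then A i 1 / d i 1 else A i 0 / d i 0 with hy_def
  have hinv : ∀ (c : ℝ), 0 < c → c / (n:ℝ) / c = 1 / n := by
    intro c hc
    rw [div_right_comm, div_self hc.ne']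
  have hprop : ∀ i, (∀ r, A i r = y i * d i r) ∧ 1/(n:ℝ) ≤ y i := by
    intro i
    rcases hgrp i with h1 | ⟨h1, h2⟩
    · obtain ⟨hA1, hA0⟩ := (hW i).1 h1
      have hyi : y i = A i 1 / d i 1 := if_pos h1
      refine ⟨?_, ?_⟩
      · intro r; fin_cases r
        · show A i 0 = y i * d i 0
          rw [hyi, h1, mul_one]; exact hA0
        · show A i 1 = y i * d i 1
          rw [hyi, div_mul_cancel₀ _ (hd0 i 1).ne']
      · rw [hyi, hA1, ← hinv (d i 1) (hd0 i 1)]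
        exact (div_le_div_iff_of_pos_right (hd0 i 1)).2 (le_max_left _ _)
    · obtain ⟨hA0, hA1⟩ := (hW i).2 h1
      have hyi : y i = A i 0 / d i 0 := if_neg h1.ne
      refine ⟨?_, ?_⟩
      · intro r; fin_cases r
        · show A i 0 = y i * d i 0
          rw [hyi, div_mul_cancel₀ _ (hd0 i 0).ne']
        · show A i 1 = y i * d i 1
          rw [hyi, h2, mul_one]; exact hA1
      · rw [hyi, hA0, ← hinv (d i 0) (hd0 i 0)]
        exact (div_le_div_iff_of_pos_right (hd0 i 0)).2 (le_max_left _ _)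
  have hu : ∀ i, util (d i) (A i) = y i := by
    intro i
    rw [util_eq_min (d i) (A i) (hd0 i) (fun r => hFeas.1 i r),
      (hprop i).1 0, (hprop i).1 1,
      mul_div_cancel_right₀ _ (hd0 i 0).ne', mul_div_cancel_right₀ _ (hd0 i 1).ne', min_self]
  have hsum_n : ∑ _i : Fin n, (1:ℝ)/n = 1 := by
    rw [Finset.sum_const, Finset.card_univ, Fintype.card_fin, nsmul_eq_mul, mul_one_div,
      div_self hnR.ne']
  have ht2n : ∀ j, d j 0 < 1 → t2 ≤ 1/(n:ℝ) := by
    intro j hj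
    by_contra hgt
    push_neg at hgt
    have hsum := hFeas.2 0
    have hlt : (1:ℝ) < ∑ i, A i 0 := by
      rw [← hsum_n]
      refine Finset.sum_lt_sum (fun i _ => ?_) ⟨j, Finset.mem_univ j, ?_⟩
      · rcases hgrp i with h1 | ⟨h1, h2⟩
        · have h := (hprop i).1 0
          rw [h1, mul_one] at h
          rw [h]; exact (hprop i).2
        · rw [((hW i).2 h1).1]
          exact le_of_lt (lt_of_lt_of_le hgt (le_max_right _ _))
      · rw [((hW j).2 hj).1]
        exact lt_of_lt_of_le hgt (le_max_right _ _)
    linarith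
  have ht1n : ∀ j, d j 0 = 1 → t1 ≤ 1/(n:ℝ) := by
    intro j hj
    by_contra hgt
    push_neg at hgt
    have hsum := hFeas.2 1
    have hlt : (1:ℝ) < ∑ i, A i 1 := by
      rw [← hsum_n]
      refine Finset.sum_lt_sum (fun i _ => ?_) ⟨j, Finset.mem_univ j, ?_⟩
      · rcases hgrp i with h1 | ⟨h1, h2⟩
        · rw [((hW i).1 h1).1]
          exact le_of_lt (lt_of_lt_of_le hgt (le_max_right _ _))
        · have h := (hprop i).1 1
          rw [h2, mul_one] at h
          rw [h]; exact (hprop i).2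
      · rw [((hW j).1 hj).1]
        exact lt_of_lt_of_le hgt (le_max_right _ _)
    linarith
  refine ⟨?_, ?_, ?_⟩
  · -- SI
    intro i
    rw [hu i]
    exact (hprop i).2
  · -- EF
    intro i j
    rw [hu i, util_eq_min (d i) (A j) (hd0 i) (fun r => hFeas.1 j r)]
    rcases hgrp i with hi | ⟨hi, hi2⟩ <;> rcases hgrp j with hj | ⟨hj, hj2⟩
    · -- both in G1
      obtain ⟨hAj1, hAj0⟩ := (hW j).1 hj
      obtain ⟨hAi1, hAi0⟩ := (hW i).1 hi
      by_cases hc : t1 ≤ d j 1 / n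
      · refine le_trans (min_le_left _ _) ?_
        rw [hi, div_one, hAj0, hAj1, max_eq_left hc, hinv (d j 1) (hd0 j 1)]
        exact (hprop i).2
      · refine le_trans (min_le_right _ _) ?_
        push_neg at hc
        have hyi : y i = A i 1 / d i 1 := if_pos hi
        rw [hyi]
        refine (div_le_div_iff_of_pos_right (hd0 i 1)).2 ?_
        rw [hAj1, hAi1, max_eq_right hc.le]
        exact le_max_right _ _
    · -- i in G1, j in G2
      refine le_trans (min_le_left _ _) ?_
      rw [hi, div_one, ((hW j).2 hj).1]
      refine le_trans (max_le ?_ (ht2n j hj)) (hprop i).2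
      exact (div_le_div_iff_of_pos_right hnR).2 (hd1 j 0)
    · -- i in G2, j in G1
      refine le_trans (min_le_right _ _) ?_
      rw [hi2, div_one, ((hW j).1 hj).1]
      refine le_trans (max_le ?_ (ht1n j hj)) (hprop i).2
      exact (div_le_div_iff_of_pos_right hnR).2 (hd1 j 1)
    · -- both in G2
      obtain ⟨hAj0, hAj1⟩ := (hW j).2 hj
      obtain ⟨hAi0, hAi1⟩ := (hW i).2 hi
      by_cases hc : t2 ≤ d j 0 / n
      · refine le_trans (min_le_right _ _) ?_
        rw [hi2, div_one, hAj1, hAj0, max_eq_left hc, hinv (d j 0) (hd0 j 0)]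
        exact (hprop i).2
      · refine le_trans (min_le_left _ _) ?_
        push_neg at hc
        have hyi : y i = A i 0 / d i 0 := if_neg hi.ne
        rw [hyi]
        refine (div_le_div_iff_of_pos_right (hd0 i 0)).2 ?_
        rw [hAj0, hAi0, max_eq_right hc.le]
        exact le_max_right _ _
  · -- PO
    rintro ⟨A', hF', hge, i0, hlt⟩
    have key : ∀ i r, util (d i) (A' i) * d i r ≤ A' i r := by
      intro i r
      rw [util_eq_min (d i) (A' i) (hd0 i) (fun r => hF'.1 i r)]
      fin_cases r
      · exact (le_div_iff₀ (hd0 i 0)).1 (min_le_left _ _)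
      · exact (le_div_iff₀ (hd0 i 1)).1 (min_le_right _ _)
    have h1' : (1:ℝ) < ∑ i, A' i rfull := by
      have step1 : ∑ i, A i rfull < ∑ i, util (d i) (A' i) * d i rfull := by
        refine Finset.sum_lt_sum (fun i _ => ?_) ⟨i0, Finset.mem_univ i0, ?_⟩
        · rw [(hprop i).1 rfull, ← hu i]
          exact mul_le_mul_of_nonneg_right (hge i) (hd0 i rfull).le
        · rw [(hprop i0).1 rfull, ← hu i0]
          exact mul_lt_mul_of_pos_right hlt (hd0 i0 rfull)
      calc (1:ℝ) = ∑ i, A i rfull := hfull.symm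
        _ < ∑ i, util (d i) (A' i) * d i rfull := step1
        _ ≤ ∑ i, A' i rfull := Finset.sum_le_sum (fun i _ => key i rfull)
    linarith [hF'.2 rfull]
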